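/- Let φ be the formal power series in ℝ[[z]] whose n-th coefficient equals c_{n+1} for every n ≥ 0 (so φ has constant term c_1 = 1). Then, as an identity of formal power series, (t+τ)·(z² + η·z + σ)·φ² + ((θ − tη)·z − 2tσ − στ − 1)·φ + (tσ + 1) = 0. -/

import Mathlib

open Finset PowerSeries

/-- The generating function `φ(z) = Σ_{k≥1} c_k z^{k-1}` of the sequence `(c_k)` solving
the recurrence satisfies the quadratic equation
`(t+τ)(z²+ηz+σ)φ² + ((θ−tη)z − 2tσ − στ − 1)φ + (tσ+1) = 0` as formal power series. -/
theorem stmt6 (t η θ σ τ : ℝ) (ht : 0 < t) (hσ : 0 ≤ σ) (hτ : 0 ≤ τ)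
    (hστ : σ * τ ≠ 1) (c : ℕ → ℝ) (hc1 : c 1 = 1)
    (hc : ∀ k : ℕ, 1 ≤ k →
      (1 + σ * t) * c (k + 1) =
        (θ - η * t) * c k +
          (t + τ) * ((∑ j ∈ Ico 1 k, c j * c (k - j)) +
            η * ∑ j ∈ range k, c (j + 1) * c (k - j) +
            σ * ∑ j ∈ range k, c (j + 2) * c (k - j)))
    (φ : PowerSeries ℝ)
    (hφ : ∀ n : ℕ, PowerSeries.coeff n φ = c (n + 1)) :
    PowerSeries.C (t + τ) * (PowerSeries.X ^ 2 + PowerSeries.C η * PowerSeries.X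
          + PowerSeries.C σ) * φ ^ 2
        + (PowerSeries.C (θ - t * η) * PowerSeries.X
          - PowerSeries.C (2 * t * σ + σ * τ + 1)) * φ
        + PowerSeries.C (t * σ + 1) = 0 := by
  have sq : ∀ m : ℕ, PowerSeries.coeff m (φ ^ 2)
      = ∑ j ∈ range (m + 1), c (j + 1) * c (m - j + 1) := by
    intro m
    rw [pow_two, PowerSeries.coeff_mul, Finset.Nat.sum_antidiagonal_eq_sum_range_succ_mk]
    refine Finset.sum_congr rfl fun j hj => ?_
    rw [hφ, hφ]
  obtain ⟨A1, hA1⟩ : ∃ x : ℝ, x = t + τ := ⟨_, rfl⟩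
  obtain ⟨A2, hA2⟩ : ∃ x : ℝ, x = (t + τ) * η := ⟨_, rfl⟩
  obtain ⟨A3, hA3⟩ : ∃ x : ℝ, x = (t + τ) * σ := ⟨_, rfl⟩
  obtain ⟨A4, hA4⟩ : ∃ x : ℝ, x = θ - t * η := ⟨_, rfl⟩
  obtain ⟨A5, hA5⟩ : ∃ x : ℝ, x = 2 * t * σ + σ * τ + 1 := ⟨_, rfl⟩
  obtain ⟨A6, hA6⟩ : ∃ x : ℝ, x = t * σ + 1 := ⟨_, rfl⟩
  have hE : PowerSeries.C (t + τ) * (PowerSeries.X ^ 2 + PowerSeries.C η * PowerSeries.X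
          + PowerSeries.C σ) * φ ^ 2
        + (PowerSeries.C (θ - t * η) * PowerSeries.X
          - PowerSeries.C (2 * t * σ + σ * τ + 1)) * φ
        + PowerSeries.C (t * σ + 1)
      = PowerSeries.C A1 * (PowerSeries.X ^ 2 * φ ^ 2)
        + PowerSeries.C A2 * (PowerSeries.X * φ ^ 2)
        + PowerSeries.C A3 * φ ^ 2
        + PowerSeries.C A4 * (PowerSeries.X * φ)
        - PowerSeries.C A5 * φ
        + PowerSeries.C A6 := by
    rw [hA1, hA2, hA3, hA4, hA5, hA6]
    simp only [map_mul, map_add, map_sub, map_one, map_ofNat]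
    ring
  rw [hE]
  ext n
  have hXf : ∀ (f : PowerSeries ℝ) (m : ℕ), PowerSeries.coeff m (PowerSeries.X * f)
      = if 1 ≤ m then PowerSeries.coeff (m - 1) f else 0 := by
    intro f m
    rw [← pow_one (PowerSeries.X : PowerSeries ℝ), PowerSeries.coeff_X_pow_mul']
  simp only [map_add, map_sub, PowerSeries.coeff_C_mul, PowerSeries.coeff_X_pow_mul', hXf,
    PowerSeries.coeff_C, map_zero]
  rcases Nat.eq_zero_or_pos n with hn | hn
  · subst hn
    simp only [if_neg (by norm_num : ¬ (2:ℕ) ≤ 0), if_neg (by norm_num : ¬ (1:ℕ) ≤ 0), sq, hφ]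
    norm_num [hc1, hA3, hA4, hA5, hA6]
    ring
  · have e2 : (if 2 ≤ n then PowerSeries.coeff (n - 2) (φ ^ 2) else 0)
        = ∑ j ∈ Ico 1 n, c j * c (n - j) := by
      rcases lt_or_ge n 2 with h | h
      · rw [if_neg (by omega)]
        have hn1 : n = 1 := by omega
        subst hn1
        simp
      · rw [if_pos h, sq, Finset.sum_Ico_eq_sum_range]
        refine Finset.sum_congr (by congr 1; omega) fun j hj => ?_
        simp only [Finset.mem_range] at hj
        congr 2 <;> omega
    have e3 : PowerSeries.coeff (n - 1) (φ ^ 2)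
        = ∑ j ∈ range n, c (j + 1) * c (n - j) := by
      rw [sq]
      refine Finset.sum_congr (by congr 1; omega) fun j hj => ?_
      simp only [Finset.mem_range] at hj
      congr 2
      omega
    have e4 : PowerSeries.coeff n (φ ^ 2)
        = (∑ j ∈ range n, c (j + 2) * c (n - j)) + c (n + 1) := by
      rw [sq, Finset.sum_range_succ']
      congr 1
      · refine Finset.sum_congr rfl fun j hj => ?_
        simp only [Finset.mem_range] at hj
        congr 2 <;> omega
      · rw [hc1, one_mul, Nat.sub_zero]
    have e5 : PowerSeries.coeff (n - 1) φ = c n := by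
      rw [hφ]
      congr 1
      omega
    rw [e2, e3, e4, e5, hφ, if_pos (show 1 ≤ n from hn), if_pos (show 1 ≤ n from hn), if_neg (by omega : ¬ n = 0), hA1, hA2, hA3, hA4, hA5]
    linear_combination -hc n hn
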